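/- Polynomial numerator of a Cayley-perturbed linear optical circuit: fix M, m, and for each i ∈ {1,…,m} a pair of distinct modes a_i ≠ b_i in Fin M, a 2×2 unitary G_i, a 2×2 unitary L_i and real phases φ_{i,1}, φ_{i,2}. For θ ∈ ℝ set q_i(θ) := ∏_{j=1,2} (1 + iθ·e^{iφ_{i,j}/2}·sin(φ_{i,j}/2)), p_{i,j}(θ) := e^{iφ_{i,j}}·(1 − iθ·e^{−iφ_{i,j}/2}·sin(φ_{i,j}/2))·(1 + iθ·e^{iφ_{i,3−j}/2}·sin(φ_{i,3−j}/2)), and H_i(θ) := q_i(θ)⁻¹ · L_i·diag(p_{i,1}(θ), p_{i,2}(θ))·L_i† (defined when q_i(θ) ≠ 0). Let E_i(θ) be the M×M matrix acting as H_i(θ)·G_i on the two modes {a_i, b_i} and as the identity on all other modes, and let V(θ) := E_m(θ)·E_{m−1}(θ)⋯E_1(θ). Then there exists an M×M matrix N whose entries are complex polynomials of degree at most 2m such that, for every real θ with q_i(θ) ≠ 0 for all i, (∏_{i=1}^{m} q_i(θ)) · V(θ) equals the entrywise evaluation of N at θ. -/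

import Mathlib

open Matrix

/-- The Cayley denominator `q(θ) = ∏_{j ∈ Fin 2} (1 + iθ e^{iφ_j/2} sin(φ_j/2))`
of a two-mode gate with eigenphases `φ : Fin 2 → ℝ`. -/
noncomputable def cayleyQ (φ : Fin 2 → ℝ) (θ : ℝ) : ℂ :=
  ∏ j : Fin 2, (1 + Complex.I * (θ : ℂ) * Complex.exp (Complex.I * ((φ j / 2 : ℝ) : ℂ)) *
    (Real.sin (φ j / 2) : ℂ))

/-- The Cayley numerator eigenvalue
`p_j(θ) = e^{iφ_j} (1 - iθ e^{-iφ_j/2} sin(φ_j/2)) (1 + iθ e^{iφ_{3-j}/2} sin(φ_{3-j}/2))`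
of a two-mode gate; here `j + 1 : Fin 2` is the index other than `j`. -/
noncomputable def cayleyP (φ : Fin 2 → ℝ) (j : Fin 2) (θ : ℝ) : ℂ :=
  Complex.exp (Complex.I * ((φ j : ℝ) : ℂ)) *
    (1 - Complex.I * (θ : ℂ) * Complex.exp (-Complex.I * ((φ j / 2 : ℝ) : ℂ)) *
      (Real.sin (φ j / 2) : ℂ)) *
    (1 + Complex.I * (θ : ℂ) * Complex.exp (Complex.I * ((φ (j + 1) / 2 : ℝ) : ℂ)) *
      (Real.sin (φ (j + 1) / 2) : ℂ))

/-- The Cayley transform of the `2×2` unitary `L · diag(e^{iφ_1}, e^{iφ_2}) · Lᴴ`,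
in diagonal form: `H(θ) = q(θ)⁻¹ • (L · diag(p_1(θ), p_2(θ)) · Lᴴ)`. -/
noncomputable def cayleyGate (L : Matrix (Fin 2) (Fin 2) ℂ) (φ : Fin 2 → ℝ) (θ : ℝ) :
    Matrix (Fin 2) (Fin 2) ℂ :=
  (cayleyQ φ θ)⁻¹ • (L * Matrix.diagonal (fun j => cayleyP φ j θ) * Lᴴ)

/-- The `M × M` matrix of a two-mode gate: it acts as the `2×2` matrix `A` on the two
modes `a ≠ b` and as the identity on all other modes. -/
def twoModeGate (M : ℕ) (a b : Fin M) (A : Matrix (Fin 2) (Fin 2) ℂ) :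
    Matrix (Fin M) (Fin M) ℂ := fun x y =>
  if x = a then (if y = a then A 0 0 else if y = b then A 0 1 else 0)
  else if x = b then (if y = a then A 1 0 else if y = b then A 1 1 else 0)
  else (if y = x then 1 else 0)


noncomputable def polyQ (φ : Fin 2 → ℝ) : Polynomial ℂ :=
  ∏ j : Fin 2, (1 + Polynomial.C (Complex.I * Complex.exp (Complex.I * ((φ j / 2 : ℝ) : ℂ)) *
    (Real.sin (φ j / 2) : ℂ)) * Polynomial.X)

noncomputable def polyP (φ : Fin 2 → ℝ) (j : Fin 2) : Polynomial ℂ :=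
  Polynomial.C (Complex.exp (Complex.I * ((φ j : ℝ) : ℂ))) *
    (1 - Polynomial.C (Complex.I * Complex.exp (-Complex.I * ((φ j / 2 : ℝ) : ℂ)) *
      (Real.sin (φ j / 2) : ℂ)) * Polynomial.X) *
    (1 + Polynomial.C (Complex.I * Complex.exp (Complex.I * ((φ (j + 1) / 2 : ℝ) : ℂ)) *
      (Real.sin (φ (j + 1) / 2) : ℂ)) * Polynomial.X)

lemma polyQ_eval (φ : Fin 2 → ℝ) (θ : ℝ) : (polyQ φ).eval (θ : ℂ) = cayleyQ φ θ := by
  simp only [polyQ, cayleyQ, Polynomial.eval_prod, Polynomial.eval_add, Polynomial.eval_one,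
    Polynomial.eval_mul, Polynomial.eval_C, Polynomial.eval_X]
  exact Finset.prod_congr rfl fun j _ => by ring

lemma polyP_eval (φ : Fin 2 → ℝ) (j : Fin 2) (θ : ℝ) :
    (polyP φ j).eval (θ : ℂ) = cayleyP φ j θ := by
  simp only [polyP, cayleyP, Polynomial.eval_mul, Polynomial.eval_add, Polynomial.eval_sub,
    Polynomial.eval_one, Polynomial.eval_C, Polynomial.eval_X]
  ring

lemma deg_lin (c : ℂ) : (1 + Polynomial.C c * Polynomial.X).degree ≤ 1 := by
  have h : (1 + Polynomial.C c * Polynomial.X)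
      = Polynomial.C c * Polynomial.X + Polynomial.C 1 := by rw [Polynomial.C_1]; ring
  rw [h]; exact Polynomial.degree_linear_le

lemma deg_lin' (c : ℂ) : (1 - Polynomial.C c * Polynomial.X).degree ≤ 1 := by
  have h : (1 - Polynomial.C c * Polynomial.X)
      = 1 + Polynomial.C (-c) * Polynomial.X := by rw [Polynomial.C_neg]; ring
  rw [h]; exact deg_lin _

lemma polyQ_deg (φ : Fin 2 → ℝ) : (polyQ φ).degree ≤ (2 : ℕ) := by
  refine le_trans (Polynomial.degree_prod_le _ _) ?_
  refine le_trans (Finset.sum_le_sum fun j _ => deg_lin _) ?_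
  simp

lemma polyP_deg (φ : Fin 2 → ℝ) (j : Fin 2) : (polyP φ j).degree ≤ (2 : ℕ) := by
  refine le_trans (Polynomial.degree_mul_le _ _) ?_
  have h1 : (Polynomial.C (Complex.exp (Complex.I * ((φ j : ℝ) : ℂ))) *
      (1 - Polynomial.C (Complex.I * Complex.exp (-Complex.I * ((φ j / 2 : ℝ) : ℂ)) *
      (Real.sin (φ j / 2) : ℂ)) * Polynomial.X)).degree ≤ 1 := by
    refine le_trans (Polynomial.degree_mul_le _ _) ?_
    calc _ ≤ (0 : WithBot ℕ) + 1 := add_le_add Polynomial.degree_C_le (deg_lin' _)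
      _ = 1 := by rw [zero_add]
  calc _ ≤ (1 : WithBot ℕ) + 1 := add_le_add h1 (deg_lin _)
    _ = ((2 : ℕ) : WithBot ℕ) := by norm_num

lemma entry_deg_mul {n : Type*} [Fintype n] (A B : Matrix n n (Polynomial ℂ)) (d e : ℕ)
    (hA : ∀ x y, (A x y).degree ≤ (d : ℕ)) (hB : ∀ x y, (B x y).degree ≤ (e : ℕ)) :
    ∀ x y, ((A * B) x y).degree ≤ ((d + e : ℕ) : WithBot ℕ) := by
  intro x y
  rw [Matrix.mul_apply]
  refine le_trans (Polynomial.degree_sum_le _ _) ?_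
  refine Finset.sup_le fun k _ => ?_
  refine le_trans (Polynomial.degree_mul_le _ _) ?_
  rw [Nat.cast_add]
  exact add_le_add (hA x k) (hB k y)

noncomputable def polyA (L G : Matrix (Fin 2) (Fin 2) ℂ) (φ : Fin 2 → ℝ) :
    Matrix (Fin 2) (Fin 2) (Polynomial ℂ) :=
  L.map Polynomial.C * Matrix.diagonal (polyP φ) * Lᴴ.map Polynomial.C * G.map Polynomial.C

lemma polyA_deg (L G : Matrix (Fin 2) (Fin 2) ℂ) (φ : Fin 2 → ℝ) :
    ∀ x y, ((polyA L G φ) x y).degree ≤ ((2 : ℕ) : WithBot ℕ) := by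
  have hC : ∀ (K : Matrix (Fin 2) (Fin 2) ℂ) x y,
      ((K.map Polynomial.C) x y).degree ≤ ((0 : ℕ) : WithBot ℕ) := by
    intro K x y
    simpa using (Polynomial.degree_C_le : (Polynomial.C (K x y)).degree ≤ 0)
  have hd : ∀ x y, ((Matrix.diagonal (polyP φ)) x y).degree ≤ ((2 : ℕ) : WithBot ℕ) := by
    intro x y
    by_cases h : x = y
    · subst h; rw [Matrix.diagonal_apply_eq]; exact polyP_deg φ x
    · rw [Matrix.diagonal_apply_ne _ h]; simp
  have h1 := entry_deg_mul _ _ 0 2 (hC L) hd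
  have h2 := entry_deg_mul _ _ (0 + 2) 0 h1 (hC Lᴴ)
  have h3 := entry_deg_mul _ _ (0 + 2 + 0) 0 h2 (hC G)
  simpa [polyA] using h3

lemma polyA_eval (L G : Matrix (Fin 2) (Fin 2) ℂ) (φ : Fin 2 → ℝ) (θ : ℝ) :
    (polyA L G φ).map (fun P => P.eval (θ : ℂ)) =
      L * Matrix.diagonal (fun j => cayleyP φ j θ) * Lᴴ * G := by
  have hev : (fun P : Polynomial ℂ => P.eval (θ : ℂ)) = (Polynomial.evalRingHom (θ : ℂ)) := rfl
  rw [polyA, hev, Matrix.map_mul, Matrix.map_mul, Matrix.map_mul]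
  congr 1
  · congr 1
    · congr 1
      · ext x y; simp
      · rw [Matrix.diagonal_map (by simp)]
        exact congrArg Matrix.diagonal (funext fun j => polyP_eval φ j θ)
    · ext x y; simp
  · ext x y; simp

noncomputable def polyE (M : ℕ) (a b : Fin M) (A : Matrix (Fin 2) (Fin 2) (Polynomial ℂ))
    (q : Polynomial ℂ) : Matrix (Fin M) (Fin M) (Polynomial ℂ) := fun x y =>
  if x = a then (if y = a then A 0 0 else if y = b then A 0 1 else 0)
  else if x = b then (if y = a then A 1 0 else if y = b then A 1 1 else 0)
  else (if y = x then q else 0)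

lemma polyE_deg {M : ℕ} (a b : Fin M) (A : Matrix (Fin 2) (Fin 2) (Polynomial ℂ))
    (q : Polynomial ℂ) (hA : ∀ x y, (A x y).degree ≤ ((2 : ℕ) : WithBot ℕ))
    (hq : q.degree ≤ ((2 : ℕ) : WithBot ℕ)) :
    ∀ x y, ((polyE M a b A q) x y).degree ≤ ((2 : ℕ) : WithBot ℕ) := by
  intro x y
  unfold polyE
  split_ifs <;> first | exact hA _ _ | exact hq | simp

lemma polyE_eval {M : ℕ} (a b : Fin M) (L G : Matrix (Fin 2) (Fin 2) ℂ) (φ : Fin 2 → ℝ)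
    (θ : ℝ) (hq : cayleyQ φ θ ≠ 0) :
    (polyE M a b (polyA L G φ) (polyQ φ)).map (fun P => P.eval (θ : ℂ)) =
      cayleyQ φ θ • twoModeGate M a b (cayleyGate L φ θ * G) := by
  have key : ∀ r c, Polynomial.eval (θ : ℂ) ((polyA L G φ) r c) =
      cayleyQ φ θ * (cayleyGate L φ θ * G) r c := by
    intro r c
    have h := congrFun (congrFun (polyA_eval L G φ θ) r) c
    rw [Matrix.map_apply] at h
    rw [h, cayleyGate, smul_mul_assoc, Matrix.smul_apply, smul_eq_mul, ← mul_assoc,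
      mul_inv_cancel₀ hq, one_mul]
  ext x y
  simp only [Matrix.map_apply, polyE, twoModeGate, Matrix.smul_apply, smul_eq_mul]
  split_ifs <;> simp [key, polyQ_eval]

lemma list_deg {M : ℕ} {ι : Type*} (N : ι → Matrix (Fin M) (Fin M) (Polynomial ℂ))
    (h : ∀ i x y, ((N i) x y).degree ≤ ((2 : ℕ) : WithBot ℕ)) :
    ∀ l : List ι, ∀ x y,
      (((l.map N).prod) x y).degree ≤ ((2 * l.length : ℕ) : WithBot ℕ) := by
  intro l
  induction l with
  | nil =>
      intro x y
      simp only [List.map_nil, List.prod_nil, List.length_nil]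
      rw [Matrix.one_apply]
      split_ifs <;> simp
  | cons i t ih =>
      intro x y
      simp only [List.map_cons, List.prod_cons, List.length_cons]
      have := entry_deg_mul (N i) ((t.map N).prod) 2 (2 * t.length) (h i) ih x y
      refine le_trans this (le_of_eq ?_)
      congr 1
      ring

lemma list_eval {M m : ℕ} (E : Fin m → Matrix (Fin M) (Fin M) ℂ)
    (N : Fin m → Matrix (Fin M) (Fin M) (Polynomial ℂ)) (q : Fin m → ℂ) (θ : ℝ)
    (h : ∀ i, (N i).map (fun P => P.eval (θ : ℂ)) = q i • E i) :
    ∀ l : List (Fin m),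
      ((l.map q).prod) • (l.map E).prod = ((l.map N).prod).map (fun P => P.eval (θ : ℂ)) := by
  have hev : (fun P : Polynomial ℂ => P.eval (θ : ℂ)) = ⇑(Polynomial.evalRingHom (θ : ℂ)) := rfl
  intro l
  induction l with
  | nil =>
      simp only [List.map_nil, List.prod_nil, one_smul]
      rw [hev, Matrix.map_one _ (map_zero _) (map_one _)]
  | cons i t ih =>
      simp only [List.map_cons, List.prod_cons]
      rw [hev, Matrix.map_mul, ← hev, ← ih, h i]
      rw [smul_mul_assoc, mul_smul_comm, smul_smul]


/-- **Polynomial numerator of a Cayley-perturbed linear optical circuit.**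
For the circuit `V(θ) = E_m(θ) ⋯ E_1(θ)` whose `i`-th two-mode gate is the Cayley
perturbation `H_i(θ) · G_i` on modes `a_i ≠ b_i`, there is a matrix `Nmat` of complex
polynomials of degree at most `2m` such that `(∏_i q_i(θ)) • V(θ)` equals the entrywise
evaluation of `Nmat` at `θ`, for every real `θ` with all `q_i(θ) ≠ 0`. -/
theorem cayley_circuit_polynomial_numerator (M m : ℕ)
    (a b : Fin m → Fin M) (hab : ∀ i, a i ≠ b i)
    (G L : Fin m → Matrix (Fin 2) (Fin 2) ℂ)
    (hG : ∀ i, G i ∈ Matrix.unitaryGroup (Fin 2) ℂ)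
    (hL : ∀ i, L i ∈ Matrix.unitaryGroup (Fin 2) ℂ)
    (φ : Fin m → Fin 2 → ℝ) :
    ∃ Nmat : Matrix (Fin M) (Fin M) (Polynomial ℂ),
      (∀ x y, (Nmat x y).degree ≤ (2 * m : ℕ)) ∧
      ∀ θ : ℝ, (∀ i, cayleyQ (φ i) θ ≠ 0) →
        (∏ i, cayleyQ (φ i) θ) •
            ((List.finRange m).reverse.map (fun i =>
              twoModeGate M (a i) (b i) (cayleyGate (L i) (φ i) θ * G i))).prod =
          Nmat.map (fun P => P.eval (θ : ℂ)) := by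
  set Nm : Fin m → Matrix (Fin M) (Fin M) (Polynomial ℂ) :=
    fun i => polyE M (a i) (b i) (polyA (L i) (G i) (φ i)) (polyQ (φ i)) with hNm
  refine ⟨(((List.finRange m).reverse).map Nm).prod, ?_, ?_⟩
  · intro x y
    have := list_deg Nm (fun i => polyE_deg _ _ _ _ (polyA_deg _ _ _) (polyQ_deg _))
      ((List.finRange m).reverse) x y
    simpa using this
  · intro θ hq
    have hprod : (∏ i, cayleyQ (φ i) θ) =
        (((List.finRange m).reverse).map (fun i => cayleyQ (φ i) θ)).prod := by
      rw [Fin.prod_univ_def, List.map_reverse, List.prod_reverse]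
    rw [hprod]
    exact list_eval _ Nm _ θ (fun i => polyE_eval (a i) (b i) (L i) (G i) (φ i) θ (hq i))
      ((List.finRange m).reverse)
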